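/- The map w ↦ (sgn_𝔓(w), sgn_𝔔(w)) from the extended affine symmetric group to pairs of increasing words of length n is injective. -/

import Mathlib

/-- One step of Blasiak's sign insertion, acting on states
`(counter, 𝔓, 𝔔, remaining word)`. -/
def signStep (n : ℕ) : ℤ × List ℤ × List ℤ × List ℤ → ℤ × List ℤ × List ℤ × List ℤ
  | (c, P, Q, []) => (c, P, Q, [])
  | (c, P, Q, a :: w) =>
    if ∀ p ∈ P, p < a then (c + 1, P ++ [a], Q ++ [c + 1], w)
    else
      match P.find? (fun p => decide (a < p)) with
      | some b => (c + 1, P.map (fun x => if x = b then a else x), Q, w ++ [(n : ℤ) + b])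
      | none => (c, P, Q, [])

namespace Stmt17Aux

abbrev S := ℤ × List ℤ × List ℤ × List ℤ

def revStep (n : ℕ) (s : S) : S :=
  if s.2.2.1.getLast? = some s.1 then
    (s.1 - 1, s.2.1.dropLast, s.2.2.1.dropLast, s.2.1.getLastD 0 :: s.2.2.2)
  else
    let b := s.2.2.2.getLastD 0 - n
    let a := (s.2.1.filter (fun x => decide (x < b))).getLastD 0
    (s.1 - 1, s.2.1.map (fun x => if x = a then b else x), s.2.2.1, a :: s.2.2.2.dropLast)

structure Inv (n : ℕ) (f : ℤ → ℤ) (s : S) : Prop where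
  sorted : s.2.1.Pairwise (· < ·)
  nodup  : ((s.2.1 ++ s.2.2.2).map f).Nodup
  qle    : ∀ q ∈ s.2.2.1, q ≤ s.1
  qlast  : s.2.2.2 = [] → s.2.2.1.getLast? = some s.1

theorem step_main {n : ℕ} {f : ℤ → ℤ} (hf : ∀ x, f ((n : ℤ) + x) = f x)
    {s : S} (h : Inv n f s) (hw : s.2.2.2 ≠ []) :
    Inv n f (signStep n s) ∧ (signStep n s).1 = s.1 + 1 ∧
      revStep n (signStep n s) = s := by
  obtain ⟨c, P, Q, w⟩ := s
  obtain ⟨hs, hnd, hq, -⟩ := h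
  simp only at hs hnd hq hw
  cases w with
  | nil => exact absurd rfl hw
  | cons a w' =>
    by_cases hall : ∀ p ∈ P, p < a
    · have hstep : signStep n (c, P, Q, a :: w') = (c + 1, P ++ [a], Q ++ [c + 1], w') := by
        rw [show signStep n (c, P, Q, a :: w') =
          (if ∀ p ∈ P, p < a then (c + 1, P ++ [a], Q ++ [c + 1], w')
           else match P.find? (fun p => decide (a < p)) with
            | some b => (c + 1, P.map (fun x => if x = b then a else x), Q, w' ++ [(n : ℤ) + b])
            | none => (c, P, Q, [])) from rfl, if_pos hall]
      rw [hstep]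
      refine ⟨⟨?_, ?_, ?_, ?_⟩, rfl, ?_⟩
      · simp only [List.pairwise_append]
        exact ⟨hs, by simp, by simpa using hall⟩
      · have e : (P ++ [a]) ++ w' = P ++ a :: w' := by simp
        rw [e]; exact hnd
      · intro q hq'
        rcases List.mem_append.1 hq' with h1 | h1
        · exact le_trans (hq q h1) (by omega)
        · simp at h1; omega
      · intro _; simp
      · simp only [revStep, List.getLast?_concat, if_pos rfl, List.dropLast_concat,
          List.getLastD_concat]
        simp
    · -- replace branch
      have haP : a ∉ P := by
        intro hmem
        rw [List.map_append] at hnd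
        exact (List.nodup_append'.1 hnd).2.2 (List.mem_map_of_mem (f := f) hmem) (by simp)
      have hfind : ∃ b, P.find? (fun p => decide (a < p)) = some b := by
        push_neg at hall
        obtain ⟨p0, hp0, hp0'⟩ := hall
        have : a < p0 := lt_of_le_of_ne hp0' (fun hh => haP (hh ▸ hp0))
        rw [← Option.isSome_iff_exists, List.find?_isSome]
        exact ⟨p0, hp0, by simpa using this⟩
      obtain ⟨b, hfind⟩ := hfind
      have hstep : signStep n (c, P, Q, a :: w') =
          (c + 1, P.map (fun x => if x = b then a else x), Q, w' ++ [(n : ℤ) + b]) := by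
        rw [show signStep n (c, P, Q, a :: w') =
          (if ∀ p ∈ P, p < a then (c + 1, P ++ [a], Q ++ [c + 1], w')
           else match P.find? (fun p => decide (a < p)) with
            | some b => (c + 1, P.map (fun x => if x = b then a else x), Q, w' ++ [(n : ℤ) + b])
            | none => (c, P, Q, [])) from rfl, if_neg hall, hfind]
      obtain ⟨hab', P₁, P₂, hPsplit, hP₁⟩ := List.find?_eq_some_iff_append.1 hfind
      have hab : a < b := by simpa using hab'
      have hP₁a : ∀ x ∈ P₁, x < a := by
        intro x hx
        have h1 : ¬ a < x := by simpa using hP₁ x hx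
        have h2 : x ≠ a := fun hh => haP (hh ▸ (hPsplit ▸ List.mem_append_left _ hx))
        omega
      subst hPsplit
      rw [List.pairwise_append, List.pairwise_cons] at hs
      obtain ⟨hsP₁, ⟨hbP₂, hsP₂⟩, hcross⟩ := hs
      have hmapP : (P₁ ++ b :: P₂).map (fun x => if x = b then a else x) = P₁ ++ a :: P₂ := by
        rw [List.map_append, List.map_cons, if_pos rfl]
        congr 1
        · conv_rhs => rw [← List.map_id P₁]
          exact List.map_congr_left (fun x hx => by
            have := hP₁a x hx; simp [show x ≠ b by omega])
        · congr 1
          conv_rhs => rw [← List.map_id P₂]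
          exact List.map_congr_left (fun x hx => by
            have := hbP₂ x hx; simp [show x ≠ b by omega])
      rw [hstep, hmapP]
      have hfb : f ((n : ℤ) + b) = f b := hf b
      have hperm : List.Perm (((P₁ ++ a :: P₂) ++ (w' ++ [(n : ℤ) + b])).map f)
          (((P₁ ++ b :: P₂) ++ (a :: w')).map f) := by
        have h2 : ((P₁ ++ a :: P₂) ++ (w' ++ [(n : ℤ) + b])).map f =
            ((P₁ ++ a :: P₂) ++ (w' ++ [b])).map f := by
          simp [hfb]
        rw [h2]
        apply List.Perm.map
        rw [← Multiset.coe_eq_coe]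
        simp only [← Multiset.coe_add, ← Multiset.cons_coe, ← Multiset.singleton_add]
        abel
      refine ⟨⟨?_, ?_, ?_, ?_⟩, rfl, ?_⟩
      · simp only [List.pairwise_append, List.pairwise_cons]
        refine ⟨hsP₁, ⟨fun x hx => lt_trans hab (hbP₂ x hx), hsP₂⟩, ?_⟩
        intro x hx y hy
        rcases List.mem_cons.1 hy with rfl | hy'
        · exact hP₁a x hx
        · exact hcross x hx y (List.mem_cons_of_mem _ hy')
      · exact (hperm.nodup_iff).2 hnd
      · intro q hq'; exact le_trans (hq q hq') (by omega)
      · intro hcon; simp at hcon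
      · -- reverse
        have hcond : ¬ (Q.getLast? = some (c + 1)) := by
          intro hc
          rcases Q.eq_nil_or_concat with rfl | ⟨Q', q, rfl⟩
          · simp at hc
          · rw [List.concat_eq_append, List.getLast?_concat] at hc
            have hqm : q ∈ Q'.concat q := by simp
            have := hq q hqm
            simp at hc; omega
        have hb' : ((w' ++ [(n : ℤ) + b]).getLastD 0 - (n : ℤ)) = b := by
          rw [List.getLastD_concat]; ring
        have hfilter : (P₁ ++ a :: P₂).filter (fun x => decide (x < b)) = P₁ ++ [a] := by
          rw [List.filter_append, List.filter_cons]
          have e1 : P₁.filter (fun x => decide (x < b)) = P₁ :=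
            List.filter_eq_self.2 (fun x hx => by
              simp; exact lt_trans (hP₁a x hx) hab)
          have e2 : P₂.filter (fun x => decide (x < b)) = [] :=
            List.filter_eq_nil_iff.2 (fun x hx => by
              simp; exact le_of_lt (hbP₂ x hx))
          simp [e1, e2, hab]
        have hmapback : (P₁ ++ a :: P₂).map (fun x => if x = a then b else x) =
            P₁ ++ b :: P₂ := by
          rw [List.map_append, List.map_cons, if_pos rfl]
          congr 1
          · conv_rhs => rw [← List.map_id P₁]
            exact List.map_congr_left (fun x hx => by
              have := hP₁a x hx; simp [show x ≠ a by omega])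
          · congr 1
            conv_rhs => rw [← List.map_id P₂]
            exact List.map_congr_left (fun x hx => by
              have h1 := hbP₂ x hx; simp [show x ≠ a by omega])
        simp only [revStep]
        rw [if_neg hcond]
        simp only [List.getLastD_concat, List.dropLast_concat,
          show ((n : ℤ) + b - (n : ℤ)) = b from by ring, hfilter, hmapback]
        rw [Prod.mk.injEq]
        exact ⟨by ring, rfl⟩



theorem signStep_fixed (n : ℕ) {s : S} (h : s.2.2.2 = []) : signStep n s = s := by
  obtain ⟨c, P, Q, w⟩ := s
  simp only at h
  subst h
  rfl

theorem run_spec {n : ℕ} {f : ℤ → ℤ} (hf : ∀ x, f ((n : ℤ) + x) = f x)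
    {s0 : S} (h0 : Inv n f s0) (h00 : s0.1 = 0) {N : ℕ}
    (hN : ((signStep n)^[N] s0).2.2.2 = []) :
    ∃ K : ℕ, (signStep n)^[N] s0 = (signStep n)^[K] s0 ∧
      ((signStep n)^[K] s0).1 = (K : ℤ) ∧
      ((signStep n)^[K] s0).2.2.2 = [] ∧
      ((signStep n)^[K] s0).2.2.1.getLast? = some (K : ℤ) ∧
      (revStep n)^[K] ((signStep n)^[K] s0) = s0 := by
  have hinv : ∀ k, Inv n f ((signStep n)^[k] s0) := by
    intro k
    induction k with
    | zero => exact h0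
    | succ k ih =>
      rw [Function.iterate_succ_apply']
      by_cases hw : ((signStep n)^[k] s0).2.2.2 = []
      · rw [signStep_fixed n hw]; exact ih
      · exact (step_main hf ih hw).1
  have hex : ∃ k, ((signStep n)^[k] s0).2.2.2 = [] := ⟨N, hN⟩
  set K := Nat.find hex with hK
  have hKword : ((signStep n)^[K] s0).2.2.2 = [] := Nat.find_spec hex
  have hne : ∀ k, k < K → ((signStep n)^[k] s0).2.2.2 ≠ [] := fun k hk => Nat.find_min hex hk
  have hcnt : ∀ k, k ≤ K → ((signStep n)^[k] s0).1 = (k : ℤ) := by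
    intro k
    induction k with
    | zero => intro _; simpa using h00
    | succ k ih =>
      intro hk
      rw [Function.iterate_succ_apply']
      have hw := hne k (by omega)
      rw [(step_main hf (hinv k) hw).2.1, ih (by omega)]
      push_cast; ring
  have hconst : ∀ m, K ≤ m → (signStep n)^[m] s0 = (signStep n)^[K] s0 := by
    intro m hm
    obtain ⟨d, rfl⟩ := Nat.exists_eq_add_of_le hm
    rw [Nat.add_comm, Function.iterate_add_apply]
    exact Function.iterate_fixed (signStep_fixed n hKword) d
  have hrev : ∀ k, k ≤ K →
      (revStep n)^[k] ((signStep n)^[K] s0) = (signStep n)^[K - k] s0 := by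
    intro k
    induction k with
    | zero => intro _; simp
    | succ k ih =>
      intro hk
      rw [Function.iterate_succ_apply', ih (by omega)]
      have h1 : K - k = (K - (k + 1)) + 1 := by omega
      rw [h1, Function.iterate_succ_apply']
      exact (step_main hf (hinv _) (hne _ (by omega))).2.2
  have hKN : K ≤ N := Nat.find_min' hex hN
  refine ⟨K, hconst N hKN, hcnt K le_rfl, hKword, ?_, ?_⟩
  · have := (hinv K).qlast hKword
    rw [hcnt K le_rfl] at this
    exact this
  · have := hrev K le_rfl
    simpa using this



theorem coe_range_map (n : ℕ) (g : ℤ → ℤ) :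
    (((List.range n) : List ℤ)).map g = List.map (fun j : ℕ => g (j : ℤ)) (List.range n) := by
  show List.map g ((List.range n).flatMap fun a => [((a : ℕ) : ℤ)]) = _
  induction (List.range n) with
  | nil => rfl
  | cons a l ih => simp only [List.flatMap_cons, List.map_append, List.map_cons, List.map_nil,
      ih, List.nil_append, List.singleton_append]

theorem initial_inv (n : ℕ) (hn : 0 < n) (u : Equiv.Perm ℤ) :
    Inv n (fun x => u.symm x % (n : ℤ))
      ((0 : ℤ), [], [], (List.range n).map (fun j => u ((j : ℤ) + 1))) := by
  rw [show ((List.range n).map (fun j => u ((j : ℤ) + 1))) =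
    List.map (fun j : ℕ => u ((j : ℤ) + 1)) (List.range n) from coe_range_map n _]
  constructor
  · simp
  · simp only [List.nil_append, List.map_map]
    have e : ((fun x => u.symm x % (n : ℤ)) ∘ fun j : ℕ => u ((j : ℤ) + 1)) =
        fun j : ℕ => ((j : ℤ) + 1) % n := by
      funext j; simp
    rw [e]
    refine List.Nodup.map_on ?_ (List.nodup_range (n := n))
    intro x hx y hy hxy
    rw [List.mem_range] at hx hy
    have hd : (n : ℤ) ∣ ((x : ℤ) + 1) - ((y : ℤ) + 1) := by
      rw [Int.dvd_iff_emod_eq_zero, Int.sub_emod, hxy]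
      simp
    obtain ⟨t, ht⟩ := hd
    have hx' : (x : ℤ) < n := by exact_mod_cast hx
    have hy' : (y : ℤ) < n := by exact_mod_cast hy
    have hn' : (0 : ℤ) < n := by exact_mod_cast hn
    have ht0 : t = 0 := by
      rcases lt_trichotomy t 0 with h | h | h
      · nlinarith [Int.ofNat_nonneg x, Int.ofNat_nonneg y]
      · exact h
      · nlinarith [Int.ofNat_nonneg x, Int.ofNat_nonneg y]
    rw [ht0, mul_zero] at ht
    have : (x : ℤ) = y := by omega
    exact_mod_cast this
  · intro q hq; simp at hq
  · intro hcon
    have := congrArg List.length hcon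
    simp at this
    omega


theorem prod_ext4 (s t : Stmt17Aux.S) (h1 : s.1 = t.1) (h2 : s.2.1 = t.2.1)
    (h3 : s.2.2.1 = t.2.2.1) (h4 : s.2.2.2 = t.2.2.2) : s = t := by
  obtain ⟨a, b, c, d⟩ := s
  obtain ⟨a', b', c', d'⟩ := t
  simp only at h1 h2 h3 h4
  subst h1; subst h2; subst h3; subst h4
  rfl

end Stmt17Aux

/-- The map `w ↦ (sgn_𝔓 w, sgn_𝔔 w)` is injective on the extended affine
symmetric group: if the sign insertions of `u` and `v` terminate with the same
pair `(𝔓, 𝔔)`, then `u = v`. -/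
theorem stmt17 (n : ℕ) (hn : 0 < n) (u v : Equiv.Perm ℤ)
    (hu : ∀ i : ℤ, u (i + n) = u i + n)
    (hv : ∀ i : ℤ, v (i + n) = v i + n)
    (N M : ℕ)
    (huN : ((signStep n)^[N]
      ((0 : ℤ), [], [], (List.range n).map (fun j => u ((j : ℤ) + 1)))).2.2.2 = [])
    (hvM : ((signStep n)^[M]
      ((0 : ℤ), [], [], (List.range n).map (fun j => v ((j : ℤ) + 1)))).2.2.2 = [])
    (hP : ((signStep n)^[N]
        ((0 : ℤ), [], [], (List.range n).map (fun j => u ((j : ℤ) + 1)))).2.1 =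
      ((signStep n)^[M]
        ((0 : ℤ), [], [], (List.range n).map (fun j => v ((j : ℤ) + 1)))).2.1)
    (hQ : ((signStep n)^[N]
        ((0 : ℤ), [], [], (List.range n).map (fun j => u ((j : ℤ) + 1)))).2.2.1 =
      ((signStep n)^[M]
        ((0 : ℤ), [], [], (List.range n).map (fun j => v ((j : ℤ) + 1)))).2.2.1) :
    u = v := by
  have hsymm : ∀ (w : Equiv.Perm ℤ), (∀ i : ℤ, w (i + n) = w i + n) →
      ∀ x, (fun y => w.symm y % (n : ℤ)) ((n : ℤ) + x) = (fun y => w.symm y % (n : ℤ)) x := by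
    intro w hw x
    have h1 : w.symm (x + n) = w.symm x + n := by
      apply w.injective
      rw [Equiv.apply_symm_apply, hw, Equiv.apply_symm_apply]
    simp only [add_comm (n : ℤ) x, h1]
    simp [Int.add_mul_emod_self_left]
  obtain ⟨Ku, hKu_eq, hKu_cnt, hKu_word, hKu_qlast, hKu_rev⟩ :=
    Stmt17Aux.run_spec (hsymm u hu) (Stmt17Aux.initial_inv n hn u) rfl huN
  obtain ⟨Kv, hKv_eq, hKv_cnt, hKv_word, hKv_qlast, hKv_rev⟩ :=
    Stmt17Aux.run_spec (hsymm v hv) (Stmt17Aux.initial_inv n hn v) rfl hvM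
  rw [hKu_eq, hKv_eq] at hP hQ
  have hKK : (Ku : ℤ) = (Kv : ℤ) := by
    have h1 := hKu_qlast
    rw [hQ, hKv_qlast] at h1
    exact (Option.some.inj h1).symm
  have hK : Ku = Kv := by exact_mod_cast hKK
  have hfinal : (signStep n)^[Ku]
      ((0 : ℤ), [], [], (List.range n).map (fun j => u ((j : ℤ) + 1))) =
      (signStep n)^[Kv]
      ((0 : ℤ), [], [], (List.range n).map (fun j => v ((j : ℤ) + 1))) :=
    Stmt17Aux.prod_ext4 _ _ (by rw [hKu_cnt, hKv_cnt, hKK]) hP hQ (by rw [hKu_word, hKv_word])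
  have hinit : ((0 : ℤ), ([] : List ℤ), ([] : List ℤ),
        (List.range n).map (fun j => u ((j : ℤ) + 1))) =
      ((0 : ℤ), ([] : List ℤ), ([] : List ℤ),
        (List.range n).map (fun j => v ((j : ℤ) + 1))) := by
    rw [← hKu_rev, ← hKv_rev, hfinal, hK]
  have hL := congrArg (fun s : Stmt17Aux.S => s.2.2.2) hinit
  simp only at hL
  rw [Stmt17Aux.coe_range_map, Stmt17Aux.coe_range_map] at hL
  have hval : ∀ j : ℕ, j < n → u ((j : ℤ) + 1) = v ((j : ℤ) + 1) := by
    intro j hj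
    have h2 := congrArg (fun l : List ℤ => l[j]?) hL
    simpa [List.getElem?_map, List.getElem?_range, hj] using h2
  have hper : ∀ (w : Equiv.Perm ℤ), (∀ i : ℤ, w (i + n) = w i + n) →
      ∀ (k : ℤ) (x : ℤ), w (x + n * k) = w x + n * k := by
    intro w hw k
    induction k using Int.induction_on with
    | zero => simp
    | succ k ih =>
      intro x
      have e : x + (n : ℤ) * ((k : ℤ) + 1) = (x + n * k) + n := by ring
      rw [e, hw, ih]; ring
    | pred k ih =>
      intro x
      have e : x + (n : ℤ) * (-(k : ℤ) - 1) + n = x + n * (-(k : ℤ)) := by ring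
      have h3 := hw (x + n * (-(k : ℤ) - 1))
      rw [e, ih] at h3
      have : w (x + (n : ℤ) * (-(k : ℤ) - 1)) = w x + n * (-(k : ℤ) - 1) := by linarith
      convert this using 2
  apply Equiv.ext
  intro i
  have hn' : (0 : ℤ) < n := by exact_mod_cast hn
  have hr0 : 0 ≤ (i - 1) % n := Int.emod_nonneg _ (by omega)
  have hrn : (i - 1) % n < n := Int.emod_lt_of_pos _ hn'
  set j : ℕ := ((i - 1) % n).toNat with hjdef
  have hji : (j : ℤ) = (i - 1) % n := Int.toNat_of_nonneg hr0
  have hjn : j < n := by omega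
  have hi : i = ((j : ℤ) + 1) + n * ((i - 1) / n) := by
    have h4 := Int.mul_ediv_add_emod (i - 1) (n : ℤ)
    omega
  calc u i = u (((j : ℤ) + 1) + n * ((i - 1) / n)) := by rw [← hi]
    _ = u ((j : ℤ) + 1) + n * ((i - 1) / n) := hper u hu _ _
    _ = v ((j : ℤ) + 1) + n * ((i - 1) / n) := by rw [hval j hjn]
    _ = v (((j : ℤ) + 1) + n * ((i - 1) / n)) := (hper v hv _ _).symm
    _ = v i := by rw [← hi]
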